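/- For q ∈ ℂ (q-binomials well-defined), integers m, N ≥ 0 and complex a, p: q^{-N(m+1)} [N+m+1, m+1]_q · Σ_{K=0}^{N} (-1)^K q^{binom(K+1,2) - NK} [N K]_q · ((1-q^{m+1})/(1-q^{m+1+K})) · (a (pq)^{m+1} q^K; p)_N = (a p^{m+1}; p)_N, where (x;p)_N = ∏_{i=0}^{N-1}(1 - x p^i). Equivalently, D_{q,x}^N { (a(pq)^{m+1} x; p)_N / (1 - x q^{m+1}) } at x = 1 equals q^{N(m+1)} (a p^{m+1}; p)_N / ((1-q^{m+1}) [N+m+1, m+1]_q). -/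

import Mathlib

noncomputable def qpoch (a q : ℂ) (n : ℕ) : ℂ := ∏ i ∈ Finset.range n, (1 - a * q ^ i)

noncomputable def qbinom (q : ℂ) (n k : ℕ) : ℂ :=
  qpoch q q n / (qpoch q q k * qpoch q q (n - k))

noncomputable def qdiff (q : ℂ) (F : ℂ → ℂ) : ℂ → ℂ := fun x => (F x - F (q * x)) / x

noncomputable def gauss (q : ℂ) : ℕ → ℕ → ℂ
  | _, 0 => 1
  | 0, _+1 => 0
  | n+1, k+1 => gauss q n (k+1) + q^(n-k) * gauss q n k

lemma gauss_zero_right (q : ℂ) (n : ℕ) : gauss q n 0 = 1 := by cases n <;> rfl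

lemma gauss_succ_succ (q : ℂ) (n k : ℕ) :
    gauss q (n+1) (k+1) = gauss q n (k+1) + q^(n-k) * gauss q n k := rfl

lemma gauss_eq_zero (q : ℂ) : ∀ n k, n < k → gauss q n k = 0 := by
  intro n
  induction n with
  | zero => intro k hk; match k, hk with | k+1, _ => rfl
  | succ n ih =>
    intro k hk
    match k, hk with
    | k+1, hk =>
      rw [gauss_succ_succ, ih _ (by omega), ih _ (by omega), mul_zero, add_zero]

lemma gauss_diag (q : ℂ) (n : ℕ) : gauss q n n = 1 := by
  induction n with
  | zero => rfl
  | succ n ih =>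
    rw [gauss_succ_succ, gauss_eq_zero q n (n+1) (by omega), ih, Nat.sub_self]
    ring

lemma qpoch_zero (a q : ℂ) : qpoch a q 0 = 1 := by simp [qpoch]

lemma qpoch_succ (a q : ℂ) (n : ℕ) :
    qpoch a q (n+1) = qpoch a q n * (1 - a * q ^ n) := Finset.prod_range_succ _ _

lemma qpoch_succ' (a q : ℂ) (n : ℕ) :
    qpoch a q (n+1) = (1 - a) * qpoch (a * q) q n := by
  rw [qpoch, Finset.prod_range_succ', qpoch, pow_zero, mul_one, mul_comm]
  congr 1
  refine Finset.prod_congr rfl fun i _ => ?_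
  ring

lemma qpoch_ne_zero (a q : ℂ) (n : ℕ) (h : ∀ i < n, a * q ^ i ≠ 1) : qpoch a q n ≠ 0 := by
  rw [qpoch]
  apply Finset.prod_ne_zero_iff.2
  intro i hi
  have := h i (Finset.mem_range.1 hi)
  intro hc
  apply this
  have : a * q ^ i = 1 := by linear_combination -hc
  exact this

lemma qpoch_factor_ne_zero (a q : ℂ) (n : ℕ) (h : qpoch a q n ≠ 0) :
    ∀ i < n, 1 - a * q ^ i ≠ 0 := by
  rw [qpoch] at h
  intro i hi
  exact Finset.prod_ne_zero_iff.1 h i (Finset.mem_range.2 hi)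

lemma gauss_eq_qbinom (q : ℂ) (n : ℕ) (hne : ∀ j ≤ n, qpoch q q j ≠ 0) :
    ∀ k ≤ n, gauss q n k = qbinom q n k := by
  induction n with
  | zero =>
    intro k hk
    interval_cases k
    simp [gauss_zero_right, qbinom, qpoch_zero]
  | succ n ih =>
    have hne' : ∀ j ≤ n, qpoch q q j ≠ 0 := fun j hj => hne j (by omega)
    intro k hk
    match k with
    | 0 =>
      rw [gauss_zero_right, qbinom, Nat.sub_zero, qpoch_zero, one_mul,
        div_self (hne _ le_rfl)]
    | k+1 =>
      by_cases hkn : k + 1 = n + 1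
      · have hkn' : k = n := by omega
        subst hkn'
        rw [gauss_diag, qbinom, Nat.sub_self, qpoch_zero, mul_one, div_self (hne _ le_rfl)]
      · have hk' : k + 1 ≤ n := by omega
        rw [gauss_succ_succ, ih hne' (k+1) hk', ih hne' k (by omega), qbinom, qbinom, qbinom]
        have e1 : qpoch q q (n+1) = qpoch q q n * (1 - q * q ^ n) := qpoch_succ q q n
        have e2 : qpoch q q (k+1) = qpoch q q k * (1 - q * q ^ k) := qpoch_succ q q k
        have e3 : n + 1 - (k + 1) = n - k := by omega
        have e4 : n - k = (n - (k+1)) + 1 := by omega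
        have e5 : qpoch q q (n - k) = qpoch q q (n - (k+1)) * (1 - q * q ^ (n - (k+1))) := by
          rw [e4, qpoch_succ]
        have h1 : qpoch q q n ≠ 0 := hne' n le_rfl
        have h2 : qpoch q q k ≠ 0 := hne' k (by omega)
        have h3 : qpoch q q (k+1) ≠ 0 := hne' (k+1) hk'
        have h4 : qpoch q q (n - (k+1)) ≠ 0 := hne' _ (by omega)
        have h5 : qpoch q q (n - k) ≠ 0 := hne' _ (by omega)
        have h6 : (1 - q * q ^ k) ≠ 0 := by
          intro hc; apply h3; rw [e2, hc, mul_zero]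
        have h7 : (1 - q * q ^ (n - (k+1))) ≠ 0 := by
          intro hc; apply h5; rw [e5, hc, mul_zero]
        rw [e3, e1, e2, e5]
        have hpows : q * q ^ k * (q * q ^ (n - (k+1))) = q * q ^ n := by
          have h : (1 + k) + (1 + (n - (k+1))) = 1 + n := by omega
          calc q * q ^ k * (q * q ^ (n - (k + 1))) = q^(1+k) * q^(1+(n-(k+1))) := by ring
            _ = q^((1+k)+(1+(n-(k+1)))) := (pow_add q _ _).symm
            _ = q^(1+n) := by rw [h]
            _ = q * q^n := by ring
        have hq' : q ^ (n - k) = q * q ^ (n - (k+1)) := by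
          rw [e4, pow_succ']
        rw [hq']
        field_simp
        linear_combination -hpows

lemma gauss_binomial (q : ℂ) (n : ℕ) (z : ℂ) :
    ∑ k ∈ Finset.range (n+1), (-1:ℂ)^k * q^(Nat.choose k 2) * gauss q n k * z^k
      = qpoch z q n := by
  induction n generalizing z with
  | zero => simp [qpoch_zero, gauss_zero_right]
  | succ n ih =>
    rw [Finset.sum_range_succ' _ (n+1)]
    have h0 : (-1:ℂ)^0 * q^(Nat.choose 0 2) * gauss q (n+1) 0 * z^0 = 1 := by
      simp [gauss_zero_right]
    rw [h0]
    have hsplit : ∀ k ∈ Finset.range (n+1),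
        (-1:ℂ)^(k+1) * q^(Nat.choose (k+1) 2) * gauss q (n+1) (k+1) * z^(k+1)
        = (-1:ℂ)^(k+1) * q^(Nat.choose (k+1) 2) * gauss q n (k+1) * z^(k+1)
          + (-(z * q^n)) * ((-1:ℂ)^k * q^(Nat.choose k 2) * gauss q n k * z^k) := by
      intro k hk
      rw [Finset.mem_range] at hk
      rw [gauss_succ_succ]
      have hch : Nat.choose (k+1) 2 = Nat.choose k 2 + k := by
        rw [Nat.choose_succ_succ]
        simp [Nat.choose_one_right]
        omega
      have hqe : q^(Nat.choose (k+1) 2) * q^(n-k) = q^(Nat.choose k 2) * q^n := by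
        rw [← pow_add, ← pow_add]
        congr 1
        omega
      have : (-1:ℂ)^(k+1) = -(-1:ℂ)^k := by rw [pow_succ]; ring
      rw [this]
      linear_combination (-(-1:ℂ)^k * gauss q n k * z^(k+1)) * hqe
    rw [Finset.sum_congr rfl hsplit, Finset.sum_add_distrib, ← Finset.mul_sum, ih]
    have htop : ∑ k ∈ Finset.range (n+1),
        (-1:ℂ)^(k+1) * q^(Nat.choose (k+1) 2) * gauss q n (k+1) * z^(k+1) + 1
        = ∑ k ∈ Finset.range (n+2), (-1:ℂ)^k * q^(Nat.choose k 2) * gauss q n k * z^k := by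
      rw [Finset.sum_range_succ' _ (n+1)]
      simp [gauss_zero_right]
    have htop2 : ∑ k ∈ Finset.range (n+2), (-1:ℂ)^k * q^(Nat.choose k 2) * gauss q n k * z^k
        = qpoch z q n := by
      rw [Finset.sum_range_succ, gauss_eq_zero q n (n+1) (by omega), ih]
      ring
    calc ∑ k ∈ Finset.range (n+1), (-1:ℂ)^(k+1) * q^(Nat.choose (k+1) 2) * gauss q n (k+1) * z^(k+1)
          + (-(z*q^n)) * qpoch z q n + 1
        = (∑ k ∈ Finset.range (n+1), (-1:ℂ)^(k+1) * q^(Nat.choose (k+1) 2) * gauss q n (k+1) * z^(k+1) + 1)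
          + (-(z*q^n)) * qpoch z q n := by ring
      _ = qpoch z q n + (-(z*q^n)) * qpoch z q n := by rw [htop, htop2]
      _ = qpoch z q (n+1) := by rw [qpoch_succ]; ring

lemma gauss_sum_zero (q : ℂ) (hq : q ≠ 0) (n t : ℕ) (ht1 : 1 ≤ t) (ht2 : t ≤ n) :
    ∑ k ∈ Finset.range (n+1),
      (-1:ℂ)^k * q^((Nat.choose k 2 : ℤ) + k * (1 - (t:ℤ))) * gauss q n k = 0 := by
  have hz : ∀ k ∈ Finset.range (n+1),
      (-1:ℂ)^k * q^((Nat.choose k 2 : ℤ) + k * (1 - (t:ℤ))) * gauss q n k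
      = (-1:ℂ)^k * q^(Nat.choose k 2) * gauss q n k * (q^((1:ℤ) - t))^k := by
    intro k _
    have : q^((Nat.choose k 2 : ℤ) + k * (1 - (t:ℤ)))
        = q^((Nat.choose k 2 : ℤ)) * (q^((1:ℤ) - t))^(k:ℕ) := by
      rw [← zpow_natCast (q^((1:ℤ)-t)) k, ← zpow_mul, ← zpow_add₀ hq]
      congr 1
      ring
    rw [this, zpow_natCast]
    ring
  rw [Finset.sum_congr rfl hz, gauss_binomial]
  apply Finset.prod_eq_zero (Finset.mem_range.2 (show t - 1 < n by omega))
  have : q^((1:ℤ) - t) * q^(t-1 : ℕ) = 1 := by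
    rw [← zpow_natCast q (t-1 : ℕ), ← zpow_add₀ hq]
    have : (1:ℤ) - t + ((t-1 : ℕ) : ℤ) = 0 := by
      push_cast [Nat.cast_sub ht1]
      ring
    rw [this, zpow_zero]
  rw [this]
  ring

lemma key0 (q : ℂ) (hq : q ≠ 0) (n : ℕ) : ∀ b : ℂ, (∀ K ≤ n, b * q^K ≠ 1) →
    ∑ k ∈ Finset.range (n+1),
      (-1:ℂ)^k * q^(Nat.choose (k+1) 2) * gauss q n k / (1 - b*q^k)
    = qpoch q q n / qpoch b q (n+1) := by
  induction n with
  | zero =>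
    intro b hb
    simp [gauss_zero_right, qpoch_zero, qpoch_succ]
  | succ n ih =>
    intro b hb
    have hAne : qpoch b q (n+1) ≠ 0 := by
      apply qpoch_ne_zero
      intro i hi
      exact hb i (by omega)
    have hBne : qpoch (b*q) q (n+1) ≠ 0 := by
      apply qpoch_ne_zero
      intro i hi
      have := hb (i+1) (by omega)
      rwa [pow_succ', ← mul_assoc] at this
    have hCne : qpoch b q (n+2) ≠ 0 := by
      apply qpoch_ne_zero
      intro i hi
      exact hb i (by omega)
    rw [Finset.sum_range_succ' _ (n+1)]
    have h0 : (-1:ℂ)^0 * q^(Nat.choose (0+1) 2) * gauss q (n+1) 0 / (1 - b*q^0) = 1/(1-b) := by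
      simp [gauss_zero_right]
    rw [h0]
    have hsplit : ∀ k ∈ Finset.range (n+1),
        (-1:ℂ)^(k+1) * q^(Nat.choose (k+1+1) 2) * gauss q (n+1) (k+1) / (1 - b*q^(k+1))
        = (-1:ℂ)^(k+1) * q^(Nat.choose (k+1+1) 2) * gauss q n (k+1) / (1 - b*q^(k+1))
          + (-q^(n+1)) * ((-1:ℂ)^k * q^(Nat.choose (k+1) 2) * gauss q n k / (1 - (b*q)*q^k)) := by
      intro k hk
      rw [Finset.mem_range] at hk
      have hd : 1 - (b*q)*q^k = 1 - b*q^(k+1) := by rw [pow_succ', ← mul_assoc]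
      have hqe : q^(Nat.choose (k+1+1) 2) * q^(n-k) = q^(n+1) * q^(Nat.choose (k+1) 2) := by
        rw [← pow_add, ← pow_add]
        congr 1
        have h1 : Nat.choose (k+1+1) 2 = Nat.choose (k+1) 2 + (k+1) := by
          rw [Nat.choose_succ_succ]
          simp [Nat.choose_one_right]
          omega
        omega
      have hdne : 1 - b*q^(k+1) ≠ 0 := by
        intro hc
        exact hb (k+1) (by omega) (by linear_combination -hc)
      rw [gauss_succ_succ, hd]
      have hs : (-1:ℂ)^(k+1) = -(-1:ℂ)^k := by rw [pow_succ]; ring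
      field_simp
      rw [hs]
      linear_combination (-(-1:ℂ)^k * gauss q n k) * hqe
    rw [Finset.sum_congr rfl hsplit, Finset.sum_add_distrib, ← Finset.mul_sum]
    have hb' : ∀ K ≤ n, (b*q) * q^K ≠ 1 := by
      intro K hK
      have := hb (K+1) (by omega)
      rwa [pow_succ', ← mul_assoc] at this
    rw [ih (b*q) hb']
    have htop : ∑ k ∈ Finset.range (n+1),
        (-1:ℂ)^(k+1) * q^(Nat.choose (k+1+1) 2) * gauss q n (k+1) / (1 - b*q^(k+1)) + 1/(1-b)
        = ∑ k ∈ Finset.range (n+2),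
            (-1:ℂ)^k * q^(Nat.choose (k+1) 2) * gauss q n k / (1 - b*q^k) := by
      rw [Finset.sum_range_succ' (fun k => (-1:ℂ)^k * q^(Nat.choose (k+1) 2) * gauss q n k / (1 - b*q^k)) (n+1)]
      simp [gauss_zero_right]
    have htop2 : ∑ k ∈ Finset.range (n+2),
        (-1:ℂ)^k * q^(Nat.choose (k+1) 2) * gauss q n k / (1 - b*q^k)
        = qpoch q q n / qpoch b q (n+1) := by
      rw [Finset.sum_range_succ, gauss_eq_zero q n (n+1) (by omega)]
      rw [ih b (fun K hK => hb K (by omega))]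
      ring
    have hC : qpoch b q (n+2) = qpoch b q (n+1) * (1 - b*q^(n+1)) := qpoch_succ b q (n+1)
    have hC' : qpoch b q (n+2) = (1-b) * qpoch (b*q) q (n+1) := qpoch_succ' b q (n+1)
    have hAB : qpoch b q (n+1) * (1 - b*q^(n+1)) = (1-b) * qpoch (b*q) q (n+1) := by
      rw [← hC, hC']
    calc (∑ k ∈ Finset.range (n+1),
            (-1:ℂ)^(k+1) * q^(Nat.choose (k+1+1) 2) * gauss q n (k+1) / (1 - b*q^(k+1)))
          + (-q^(n+1)) * (qpoch q q n / qpoch (b*q) q (n+1)) + 1/(1-b)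
        = (∑ k ∈ Finset.range (n+1),
            (-1:ℂ)^(k+1) * q^(Nat.choose (k+1+1) 2) * gauss q n (k+1) / (1 - b*q^(k+1)) + 1/(1-b))
          + (-q^(n+1)) * (qpoch q q n / qpoch (b*q) q (n+1)) := by ring
      _ = qpoch q q n / qpoch b q (n+1)
          + (-q^(n+1)) * (qpoch q q n / qpoch (b*q) q (n+1)) := by rw [htop, htop2]
      _ = qpoch q q (n+1) / qpoch b q (n+2) := by
        rw [qpoch_succ q q n, hC]
        have h1b : (1 - b*q^(n+1)) ≠ 0 := by
          intro hc; exact hb (n+1) le_rfl (by linear_combination -hc)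
        field_simp
        rw [eq_div_iff (by rw [mul_comm]; exact h1b)]
        linear_combination (-q^(n+1) * qpoch q q n) * hAB

lemma key (q b : ℂ) (hq : q ≠ 0) (n : ℕ)
    (hb : ∀ K ≤ n, b * q^K ≠ 1) :
    ∀ t ≤ n,
    ∑ k ∈ Finset.range (n+1),
      (-1:ℂ)^k * q^((Nat.choose (k+1) 2 : ℤ) - (t:ℤ)*k) * gauss q n k / (1 - b*q^k)
    = b^t * qpoch q q n / qpoch b q (n+1) := by
  intro t
  induction t with
  | zero =>
    intro _
    have : ∀ k ∈ Finset.range (n+1),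
        (-1:ℂ)^k * q^((Nat.choose (k+1) 2 : ℤ) - (0:ℤ)*k) * gauss q n k / (1 - b*q^k)
        = (-1:ℂ)^k * q^(Nat.choose (k+1) 2) * gauss q n k / (1 - b*q^k) := by
      intro k _
      rw [show ((Nat.choose (k+1) 2 : ℤ) - (0:ℤ)*k) = (Nat.choose (k+1) 2 : ℤ) by ring,
        zpow_natCast]
    simp only [Nat.cast_zero]
    rw [Finset.sum_congr rfl this, key0 q hq n b hb, pow_zero, one_mul]
  | succ t ih =>
    intro ht
    have ihv := ih (by omega)
    have hterm : ∀ k ∈ Finset.range (n+1),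
        (-1:ℂ)^k * q^((Nat.choose (k+1) 2 : ℤ) - ((t:ℤ)+1)*k) * gauss q n k / (1 - b*q^k)
        = (-1:ℂ)^k * q^((Nat.choose k 2 : ℤ) + k * (1 - ((t+1:ℕ):ℤ))) * gauss q n k
          + b * ((-1:ℂ)^k * q^((Nat.choose (k+1) 2 : ℤ) - (t:ℤ)*k) * gauss q n k / (1 - b*q^k)) := by
      intro k hk
      have hk' : k ≤ n := by have := Finset.mem_range.1 hk; omega
      have hch : Nat.choose (k+1) 2 = Nat.choose k 2 + k := by
        rw [Nat.choose_succ_succ]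
        simp [Nat.choose_one_right]
        omega
      have he1 : q^((Nat.choose k 2 : ℤ) + k * (1 - ((t+1:ℕ):ℤ)))
          = q^((Nat.choose (k+1) 2 : ℤ) - ((t:ℤ)+1)*k) := by
        congr 1
        push_cast [hch]
        ring
      have he2 : q^((Nat.choose (k+1) 2 : ℤ) - (t:ℤ)*k)
          = q^((Nat.choose (k+1) 2 : ℤ) - ((t:ℤ)+1)*k) * q^k := by
        rw [← zpow_natCast q k, ← zpow_add₀ hq]
        congr 1
        ring
      have hdne : 1 - b*q^k ≠ 0 := by
        intro hc
        exact hb k hk' (by linear_combination -hc)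
      rw [he1, he2]
      field_simp
      ring
    simp only [Nat.cast_add, Nat.cast_one]
    rw [Finset.sum_congr rfl hterm, Finset.sum_add_distrib, ← Finset.mul_sum, ihv,
      gauss_sum_zero q hq n (t+1) (by omega) ht]
    rw [pow_succ]
    ring

noncomputable def cc (q : ℂ) (n k : ℕ) : ℂ :=
  (-1)^k * q^((Nat.choose (k+1) 2 : ℤ) - (n:ℤ)*k) * gauss q n k

lemma cc_zero (q : ℂ) (n : ℕ) : cc q n 0 = 1 := by
  simp [cc, gauss_zero_right]

lemma cc_eq_zero (q : ℂ) (n k : ℕ) (h : n < k) : cc q n k = 0 := by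
  unfold cc
  rw [gauss_eq_zero q n k h]
  ring

lemma cc_pascal (q : ℂ) (hq : q ≠ 0) (n k : ℕ) (hk : k ≤ n) :
    cc q (n+1) (k+1) = cc q n (k+1) * q^(-((k:ℤ)+1)) - cc q n k * q^(-(k:ℤ)) := by
  unfold cc
  rw [gauss_succ_succ]
  have hch : Nat.choose (k+1+1) 2 = Nat.choose (k+1) 2 + (k+1) := by
    rw [Nat.choose_succ_succ]
    simp [Nat.choose_one_right]
    omega
  have e1 : q^((Nat.choose (k+1+1) 2:ℤ) - (n:ℤ)*(k+1)) * q^(-((k:ℤ)+1))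
      = q^((Nat.choose (k+1+1) 2:ℤ) - ((n+1:ℕ):ℤ)*(k+1)) := by
    rw [← zpow_add₀ hq]
    congr 1
    push_cast
    ring
  have e2 : q^((Nat.choose (k+1) 2:ℤ) - (n:ℤ)*k) * q^(-(k:ℤ))
      = q^((Nat.choose (k+1+1) 2:ℤ) - ((n+1:ℕ):ℤ)*(k+1)) * q^((n:ℕ)-(k:ℕ)) := by
    rw [← zpow_natCast q (n-k), ← zpow_add₀ hq, ← zpow_add₀ hq]
    congr 1
    push_cast [hch, Nat.cast_sub hk]
    ring
  have hc1 : ((k:ℤ)+1) = (((k+1:ℕ)):ℤ) := by push_cast; ring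
  rw [← hc1] at *
  linear_combination ((-1:ℂ)^k * gauss q n (k+1)) * e1 + ((-1:ℂ)^k * gauss q n k) * e2

lemma qdiff_iter (q : ℂ) (hq : q ≠ 0) :
    ∀ (n : ℕ) (F : ℂ → ℂ) (x : ℂ), x ≠ 0 →
    (qdiff q)^[n] F x * x^n
      = ∑ k ∈ Finset.range (n+1), cc q n k * F (q^k * x) := by
  intro n
  induction n with
  | zero =>
    intro F x hx
    simp [cc_zero]
  | succ n ih =>
    intro F x hx
    rw [Function.iterate_succ_apply]
    have h1 : (qdiff q)^[n] (qdiff q F) x * x^(n+1)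
        = ((qdiff q)^[n] (qdiff q F) x * x^n) * x := by ring
    rw [h1, ih (qdiff q F) x hx, Finset.sum_mul]
    have hterm : ∀ k ∈ Finset.range (n+1),
        cc q n k * (qdiff q F) (q^k * x) * x
        = cc q n k * q^(-(k:ℤ)) * F (q^k * x)
          - cc q n k * q^(-(k:ℤ)) * F (q^(k+1) * x) := by
      intro k hk
      have hqk : (q^k : ℂ) ≠ 0 := pow_ne_zero _ hq
      have hQ : qdiff q F (q^k * x) = (F (q^k*x) - F (q^(k+1)*x)) / (q^k * x) := by
        unfold qdiff
        rw [show q * (q^k * x) = q^(k+1) * x by rw [pow_succ']; ring]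
      rw [hQ]
      have hz : q^(-(k:ℤ)) = (q^k)⁻¹ := by rw [zpow_neg, zpow_natCast]
      rw [hz]
      field_simp
    rw [Finset.sum_congr rfl hterm, Finset.sum_sub_distrib]
    rw [Finset.sum_range_succ' (fun k => cc q (n+1) k * F (q^k * x)) (n+1)]
    rw [Finset.sum_range_succ' (fun k => cc q n k * q^(-(k:ℤ)) * F (q^k * x)) n]
    have hfin : ∀ k ∈ Finset.range (n+1),
        cc q (n+1) (k+1) * F (q^(k+1) * x)
        = cc q n (k+1) * q^(-(((k+1):ℕ):ℤ)) * F (q^(k+1)*x)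
          - cc q n k * q^(-(k:ℤ)) * F (q^(k+1)*x) := by
      intro k hk
      have hk' : k ≤ n := by have := Finset.mem_range.1 hk; omega
      rw [cc_pascal q hq n k hk']
      push_cast
      ring
    rw [Finset.sum_congr rfl hfin, Finset.sum_sub_distrib]
    have hx0 : cc q n 0 * q^(-((0:ℕ):ℤ)) * F (q^0 * x) = F x := by
      simp [cc_zero]
    have hy0 : cc q (n+1) 0 * F (q^0 * x) = F x := by
      simp [cc_zero]
    have hextend : ∑ k ∈ Finset.range (n+1), cc q n (k+1) * q^(-(((k+1):ℕ):ℤ)) * F (q^(k+1)*x)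
        = ∑ k ∈ Finset.range n, cc q n (k+1) * q^(-(((k+1):ℕ):ℤ)) * F (q^(k+1)*x) := by
      rw [Finset.sum_range_succ, cc_eq_zero q n (n+1) (by omega)]
      ring
    rw [hextend, hx0, hy0]
    ring

lemma qpoch_expand (p : ℂ) (N : ℕ) :
    ∃ C : ℕ → ℂ, ∀ y : ℂ, qpoch y p N = ∑ j ∈ Finset.range (N+1), C j * y^j := by
  classical
  set P : Polynomial ℂ := ∏ i ∈ Finset.range N, (1 - Polynomial.C (p^i) * Polynomial.X) with hP
  refine ⟨fun j => P.coeff j, fun y => ?_⟩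
  have hdeg : P.natDegree < N + 1 := by
    have h1 : P.natDegree ≤ ∑ i ∈ Finset.range N,
        ((1 : Polynomial ℂ) - Polynomial.C (p^i) * Polynomial.X).natDegree :=
      Polynomial.natDegree_prod_le _ _
    have h2 : ∀ i ∈ Finset.range N,
        ((1 : Polynomial ℂ) - Polynomial.C (p^i) * Polynomial.X).natDegree ≤ 1 := by
      intro i _
      refine (Polynomial.natDegree_sub_le _ _).trans ?_
      simp only [Polynomial.natDegree_one]
      refine max_le (by omega) ?_
      exact (Polynomial.natDegree_C_mul_le _ _).trans Polynomial.natDegree_X_le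
    have h3 : ∑ i ∈ Finset.range N,
        ((1 : Polynomial ℂ) - Polynomial.C (p^i) * Polynomial.X).natDegree ≤ N := by
      calc _ ≤ ∑ _i ∈ Finset.range N, 1 := Finset.sum_le_sum h2
        _ = N := by simp
    omega
  have heval : P.eval y = qpoch y p N := by
    rw [hP, Polynomial.eval_prod, qpoch]
    apply Finset.prod_congr rfl
    intro i _
    simp [mul_comm]
  rw [← heval, Polynomial.eval_eq_sum_range' hdeg]

lemma qpoch_split (q : ℂ) (m N : ℕ) :
    qpoch q q (N+m+1) = qpoch q q (m+1) * qpoch (q^(m+2)) q N := by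
  rw [show N+m+1 = (m+1)+N by omega, qpoch, Finset.prod_range_add, qpoch, qpoch]
  congr 1
  apply Finset.prod_congr rfl
  intro i _
  congr 1
  rw [← pow_succ', ← pow_add]
  congr 1
  omega

theorem bibasic_terminating_identity (q p a : ℂ) (hq : q ≠ 0) (m N : ℕ)
    (hq1 : ∀ K ≤ N, q ^ (m + 1 + K) ≠ 1)
    (hpoch : ∀ k ≤ N + m + 1, qpoch q q k ≠ 0) :
    (q ^ (-((N * (m + 1) : ℕ) : ℤ)) * qbinom q (N + m + 1) (m + 1) *
        ∑ K ∈ Finset.range (N + 1),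
          (-1) ^ K * q ^ (((K * (K + 1) / 2 : ℕ) : ℤ) - (N : ℤ) * (K : ℤ)) *
            qbinom q N K * ((1 - q ^ (m + 1)) / (1 - q ^ (m + 1 + K))) *
            qpoch (a * (p * q) ^ (m + 1) * q ^ K) p N =
      qpoch (a * p ^ (m + 1)) p N) ∧
    (qdiff q)^[N]
        (fun y => qpoch (a * (p * q) ^ (m + 1) * y) p N / (1 - y * q ^ (m + 1))) 1 =
      q ^ (N * (m + 1)) * qpoch (a * p ^ (m + 1)) p N /
        ((1 - q ^ (m + 1)) * qbinom q (N + m + 1) (m + 1)) := by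
  obtain ⟨C, hC⟩ := qpoch_expand p N
  have hb : ∀ K ≤ N, q^(m+1) * q^K ≠ 1 := by
    intro K hK
    rw [← pow_add]
    exact hq1 K hK
  have h1b : (1:ℂ) - q^(m+1) ≠ 0 := by
    intro hc
    exact hb 0 (by omega) (by rw [pow_zero, mul_one]; linear_combination -hc)
  have hne : ∀ j ≤ N, qpoch q q j ≠ 0 := fun j hj => hpoch j (by omega)
  have hPqN : qpoch q q N ≠ 0 := hne N le_rfl
  have hPqm : qpoch q q (m+1) ≠ 0 := hpoch (m+1) (by omega)
  have hPqNm : qpoch q q (N+m+1) ≠ 0 := hpoch _ le_rfl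
  have hsplit : qpoch q q (N+m+1) = qpoch q q (m+1) * qpoch (q^(m+2)) q N := qpoch_split q m N
  have hG : qpoch (q^(m+2)) q N ≠ 0 := by
    intro hc
    apply hPqNm
    rw [hsplit, hc, mul_zero]
  have hA : qpoch (q^(m+1)) q (N+1) ≠ 0 :=
    qpoch_ne_zero _ _ _ (fun i hi => hb i (by omega))
  have hAeq : qpoch (q^(m+1)) q (N+1) = (1 - q^(m+1)) * qpoch (q^(m+2)) q N := by
    rw [qpoch_succ']
    congr 2
  have hBval : qbinom q (N+m+1) (m+1)
      = qpoch q q (N+m+1) / (qpoch q q (m+1) * qpoch q q N) := by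
    rw [qbinom, show N+m+1-(m+1) = N from by omega]
  have hBne : qbinom q (N+m+1) (m+1) ≠ 0 := by
    rw [hBval]
    exact div_ne_zero hPqNm (mul_ne_zero hPqm hPqN)
  have hterm : ∀ K ∈ Finset.range (N+1),
      (-1:ℂ)^K * q ^ (((K*(K+1)/2 : ℕ):ℤ) - (N:ℤ)*(K:ℤ)) * qbinom q N K *
          ((1 - q^(m+1))/(1 - q^(m+1+K))) * qpoch (a*(p*q)^(m+1) * q^K) p N
      = ∑ j ∈ Finset.range (N+1),
          (C j * (a*p^(m+1))^j * q^((m+1)*j) * (1-q^(m+1))) *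
            ((-1:ℂ)^K * q^((Nat.choose (K+1) 2:ℤ) - ((N-j:ℕ):ℤ)*K) * gauss q N K /
              (1 - q^(m+1)*q^K)) := by
    intro K hK
    have hKN : K ≤ N := by have := Finset.mem_range.1 hK; omega
    rw [← gauss_eq_qbinom q N hne K hKN, pow_add q (m+1) K,
      hC (a*(p*q)^(m+1) * q^K), Finset.mul_sum]
    apply Finset.sum_congr rfl
    intro j hj
    have hjN : j ≤ N := by have := Finset.mem_range.1 hj; omega
    have hch : ((K*(K+1)/2 : ℕ):ℤ) = ((Nat.choose (K+1) 2 : ℕ) : ℤ) := by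
      congr 1
      rw [Nat.choose_two_right, Nat.succ_sub_one, Nat.mul_comm]
    have hpow : (a*(p*q)^(m+1) * q^K)^j = (a*p^(m+1))^j * q^((m+1)*j) * q^(K*j) := by
      rw [show a*(p*q)^(m+1) * q^K = (a*p^(m+1)) * q^(m+1) * q^K by rw [mul_pow]; ring,
        mul_pow, mul_pow, ← pow_mul, ← pow_mul]
    have he : q^((Nat.choose (K+1) 2:ℤ) - (N:ℤ)*K) * q^(K*j)
        = q^((Nat.choose (K+1) 2:ℤ) - ((N-j:ℕ):ℤ)*K) := by
      rw [← zpow_natCast q (K*j), ← zpow_add₀ hq]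
      congr 1
      push_cast [Nat.cast_sub hjN]
      ring
    have hdne : 1 - q^(m+1)*q^K ≠ 0 := by
      intro hc
      exact hb K hKN (by linear_combination -hc)
    rw [hch, hpow]
    linear_combination ((-1:ℂ)^K * gauss q N K * (1-q^(m+1)) * C j * (a*p^(m+1))^j
      * q^((m+1)*j) / (1 - q^(m+1)*q^K)) * he
  have hS : (∑ K ∈ Finset.range (N+1),
        (-1:ℂ)^K * q ^ (((K*(K+1)/2 : ℕ):ℤ) - (N:ℤ)*(K:ℤ)) * qbinom q N K *
          ((1 - q^(m+1))/(1 - q^(m+1+K))) * qpoch (a*(p*q)^(m+1) * q^K) p N)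
      = (1 - q^(m+1)) * q^((m+1)*N) * qpoch q q N * qpoch (a*p^(m+1)) p N /
          qpoch (q^(m+1)) q (N+1) := by
    rw [Finset.sum_congr rfl hterm, Finset.sum_comm]
    have hinner : ∀ j ∈ Finset.range (N+1),
        (∑ K ∈ Finset.range (N+1),
          (C j * (a*p^(m+1))^j * q^((m+1)*j) * (1-q^(m+1))) *
            ((-1:ℂ)^K * q^((Nat.choose (K+1) 2:ℤ) - ((N-j:ℕ):ℤ)*K) * gauss q N K /
              (1 - q^(m+1)*q^K)))
        = (C j * (a*p^(m+1))^j) *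
            ((1 - q^(m+1)) * q^((m+1)*N) * qpoch q q N / qpoch (q^(m+1)) q (N+1)) := by
      intro j hj
      have hjN : j ≤ N := by have := Finset.mem_range.1 hj; omega
      rw [← Finset.mul_sum, key q (q^(m+1)) hq N hb (N-j) (by omega)]
      have hpw : q^((m+1)*j) * (q^(m+1))^(N-j) = q^((m+1)*N) := by
        rw [← pow_mul, ← pow_add, ← Nat.mul_add, Nat.add_sub_cancel' hjN]
      linear_combination (C j * (a*p^(m+1))^j * (1-q^(m+1)) * qpoch q q N /
        qpoch (q^(m+1)) q (N+1)) * hpw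
    rw [Finset.sum_congr rfl hinner, ← Finset.sum_mul, ← hC (a*p^(m+1))]
    ring
  have hzrw : q ^ (-((N * (m + 1) : ℕ) : ℤ)) = (q^((m+1)*N))⁻¹ := by
    rw [zpow_neg, zpow_natCast, Nat.mul_comm]
  have hqpow : (q:ℂ)^((m+1)*N) ≠ 0 := pow_ne_zero _ hq
  have hfirst : q ^ (-((N * (m + 1) : ℕ) : ℤ)) * qbinom q (N + m + 1) (m + 1) *
        ∑ K ∈ Finset.range (N + 1),
          (-1) ^ K * q ^ (((K * (K + 1) / 2 : ℕ) : ℤ) - (N : ℤ) * (K : ℤ)) *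
            qbinom q N K * ((1 - q ^ (m + 1)) / (1 - q ^ (m + 1 + K))) *
            qpoch (a * (p * q) ^ (m + 1) * q ^ K) p N =
      qpoch (a * p ^ (m + 1)) p N := by
    rw [hS, hBval, hsplit, hAeq, hzrw]
    field_simp
  refine ⟨hfirst, ?_⟩
  have hD0 := qdiff_iter q hq N
    (fun y => qpoch (a * (p * q) ^ (m + 1) * y) p N / (1 - y * q ^ (m + 1))) 1 one_ne_zero
  rw [one_pow, mul_one] at hD0
  have hDS : (1 - q^(m+1)) * ((qdiff q)^[N]
        (fun y => qpoch (a * (p * q) ^ (m + 1) * y) p N / (1 - y * q ^ (m + 1))) 1)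
      = ∑ K ∈ Finset.range (N + 1),
          (-1) ^ K * q ^ (((K * (K + 1) / 2 : ℕ) : ℤ) - (N : ℤ) * (K : ℤ)) *
            qbinom q N K * ((1 - q ^ (m + 1)) / (1 - q ^ (m + 1 + K))) *
            qpoch (a * (p * q) ^ (m + 1) * q ^ K) p N := by
    rw [hD0, Finset.mul_sum]
    apply Finset.sum_congr rfl
    intro K hK
    have hKN : K ≤ N := by have := Finset.mem_range.1 hK; omega
    have hch : ((K*(K+1)/2 : ℕ):ℤ) = ((Nat.choose (K+1) 2 : ℕ) : ℤ) := by
      congr 1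
      rw [Nat.choose_two_right, Nat.succ_sub_one, Nat.mul_comm]
    have hdne : 1 - q^(m+1)*q^K ≠ 0 := by
      intro hc
      exact hb K hKN (by linear_combination -hc)
    rw [← gauss_eq_qbinom q N hne K hKN, pow_add q (m+1) K, hch]
    simp only [mul_one]
    unfold cc
    rw [show (1 : ℂ) - q ^ K * q ^ (m + 1) = 1 - q^(m+1) * q^K by ring]
    field_simp
  rw [eq_div_iff (mul_ne_zero h1b hBne)]
  have hqc : (q:ℂ)^(N*(m+1)) * q ^ (-((N * (m + 1) : ℕ) : ℤ)) = 1 := by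
    rw [hzrw, Nat.mul_comm (m+1) N]
    exact mul_inv_cancel₀ (pow_ne_zero _ hq)
  calc (qdiff q)^[N]
        (fun y => qpoch (a * (p * q) ^ (m + 1) * y) p N / (1 - y * q ^ (m + 1))) 1 *
        ((1 - q ^ (m + 1)) * qbinom q (N + m + 1) (m + 1))
      = ((1 - q^(m+1)) * ((qdiff q)^[N]
          (fun y => qpoch (a * (p * q) ^ (m + 1) * y) p N / (1 - y * q ^ (m + 1))) 1)) *
          qbinom q (N + m + 1) (m + 1) := by ring
    _ = (∑ K ∈ Finset.range (N + 1),
          (-1) ^ K * q ^ (((K * (K + 1) / 2 : ℕ) : ℤ) - (N : ℤ) * (K : ℤ)) *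
            qbinom q N K * ((1 - q ^ (m + 1)) / (1 - q ^ (m + 1 + K))) *
            qpoch (a * (p * q) ^ (m + 1) * q ^ K) p N) * qbinom q (N + m + 1) (m + 1) := by
        rw [hDS]
    _ = q ^ (N*(m+1)) * (q ^ (-((N * (m + 1) : ℕ) : ℤ)) * qbinom q (N + m + 1) (m + 1) *
          ∑ K ∈ Finset.range (N + 1),
            (-1) ^ K * q ^ (((K * (K + 1) / 2 : ℕ) : ℤ) - (N : ℤ) * (K : ℤ)) *
              qbinom q N K * ((1 - q ^ (m + 1)) / (1 - q ^ (m + 1 + K))) *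
              qpoch (a * (p * q) ^ (m + 1) * q ^ K) p N) := by
        linear_combination (-(∑ K ∈ Finset.range (N + 1),
            (-1) ^ K * q ^ (((K * (K + 1) / 2 : ℕ) : ℤ) - (N : ℤ) * (K : ℤ)) *
              qbinom q N K * ((1 - q ^ (m + 1)) / (1 - q ^ (m + 1 + K))) *
              qpoch (a * (p * q) ^ (m + 1) * q ^ K) p N) *
            qbinom q (N + m + 1) (m + 1)) * hqc
    _ = q ^ (N * (m + 1)) * qpoch (a * p ^ (m + 1)) p N := by rw [hfirst]
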